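/- Assume d ≥ 2 and let δ > 0 be such that 2·q(δ) ≤ c. Then ⟪g(δ), v₁⟫ ≥ (1 − (1/2)·(3·q(δ)/c)²) · ‖g(δ)‖, i.e., the cosine of the angle between g(δ) and ∇S(x_t) is at least 1 − (1/2)·(3q(δ)/c)² whenever g(δ) ≠ 0. -/

import Mathlib

open MeasureTheory Metric Filter
open scoped RealInnerProductSpace ENNReal

/-- sign(t) = 1 if t > 0 and -1 otherwise. -/
noncomputable def sgn (t : ℝ) : ℝ := if 0 < t then 1 else -1

/-- The uniform probability measure on the unit sphere of `EuclideanSpace ℝ (Fin d)`: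
the (d-1)-dimensional Hausdorff measure restricted to the sphere, normalized to mass 1. -/
noncomputable def sphereUniform (d : ℕ) : Measure (EuclideanSpace ℝ (Fin d)) :=
  (μH[(d : ℝ) - 1] (Metric.sphere (0 : EuclideanSpace ℝ (Fin d)) 1))⁻¹ •
    (μH[(d : ℝ) - 1]).restrict (Metric.sphere (0 : EuclideanSpace ℝ (Fin d)) 1)

/-- The population gradient-direction estimate
`g(δ) = ∫_S sign(S (x_t + δ u)) · u dσ(u)`. -/
noncomputable def gEst (d : ℕ) (S : EuclideanSpace ℝ (Fin d) → ℝ)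
    (xt : EuclideanSpace ℝ (Fin d)) (δ : ℝ) : EuclideanSpace ℝ (Fin d) :=
  ∫ u, sgn (S (xt + δ • u)) • u ∂(sphereUniform d)

section Aux
open intervalIntegral Real
variable {d : ℕ}

abbrev E' (d : ℕ) := EuclideanSpace ℝ (Fin d)

noncomputable def mEquiv (e : E' d ≃ₗᵢ[ℝ] E' d) : E' d ≃ᵐ E' d :=
  e.toHomeomorph.toMeasurableEquiv

lemma map_sphereUniform (e : E' d ≃ₗᵢ[ℝ] E' d) :
    Measure.map (mEquiv e) (sphereUniform d) = sphereUniform d := by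
  have hiso : Isometry (e : E' d → E' d) := e.isometry
  have hmapH : Measure.map (e : E' d → E' d) μH[(d:ℝ)-1] = μH[(d:ℝ)-1] := by
    rw [hiso.map_hausdorffMeasure (Or.inr e.surjective), e.surjective.range_eq, Measure.restrict_univ]
  have hpre : (e : E' d → E' d) ⁻¹' (Metric.sphere 0 1) = Metric.sphere 0 1 := by
    ext x
    simp [mem_sphere_iff_norm, e.norm_map]
  have hrestr : Measure.map (e : E' d → E' d)
      (μH[(d:ℝ)-1].restrict (Metric.sphere (0 : E' d) 1))
      = μH[(d:ℝ)-1].restrict (Metric.sphere (0 : E' d) 1) := by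
    conv_rhs => rw [← hmapH]
    rw [Measure.restrict_map hiso.continuous.measurable (Metric.isClosed_sphere (x := (0 : E' d)) (ε := 1)).measurableSet, hpre]
  have : (mEquiv e : E' d → E' d) = (e : E' d → E' d) := rfl
  unfold sphereUniform
  rw [Measure.map_smul, this, hrestr]

lemma integral_comp_iso (e : E' d ≃ₗᵢ[ℝ] E' d) (f : E' d → ℝ) :
    ∫ u, f (e u) ∂(sphereUniform d) = ∫ u, f u ∂(sphereUniform d) := by
  conv_rhs => rw [← map_sphereUniform e]
  rw [MeasureTheory.integral_map_equiv]
  rfl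

lemma measure_preimage_iso (e : E' d ≃ₗᵢ[ℝ] E' d) (A : Set (E' d)) :
    sphereUniform d ((e : E' d → E' d) ⁻¹' A) = sphereUniform d A := by
  conv_rhs => rw [← map_sphereUniform e]
  rw [MeasurableEquiv.map_apply]
  rfl

lemma integral_inner_invariant (h₁ h₂ : E' d) (h : ‖h₁‖ = ‖h₂‖) (f : ℝ → ℝ) :
    ∫ u, f ⟪h₁, u⟫ ∂(sphereUniform d) = ∫ u, f ⟪h₂, u⟫ ∂(sphereUniform d) := by
  set e : E' d ≃ₗᵢ[ℝ] E' d := Submodule.reflection (ℝ ∙ (h₁ - h₂))ᗮ with he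
  have h12 : e h₁ = h₂ := Submodule.reflection_sub h
  have := integral_comp_iso e (fun u => f ⟪h₂, u⟫)
  rw [← this]
  congr 1
  ext u
  rw [← h12, LinearIsometryEquiv.inner_map_map]

lemma measure_inner_invariant (h₁ h₂ : E' d) (h : ‖h₁‖ = ‖h₂‖) (s : ℝ) :
    sphereUniform d {u | |⟪h₁, u⟫| ≤ s} = sphereUniform d {u | |⟪h₂, u⟫| ≤ s} := by
  set e : E' d ≃ₗᵢ[ℝ] E' d := Submodule.reflection (ℝ ∙ (h₁ - h₂))ᗮ with he
  have h12 : e h₁ = h₂ := Submodule.reflection_sub h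
  have := measure_preimage_iso e {u | |⟪h₂, u⟫| ≤ s}
  rw [← this]
  congr 1
  ext u
  simp only [Set.mem_preimage, Set.mem_setOf_eq]
  rw [← h12, LinearIsometryEquiv.inner_map_map]

lemma abs_cos_periodic : Function.Periodic (fun θ : ℝ => |Real.cos θ|) (2 * π) :=
  fun x => by simp [Real.cos_add_two_pi]

lemma integral_abs_cos_two_pi : ∫ θ in (0:ℝ)..(2*π), |Real.cos θ| = 4 := by
  have pi_pos := Real.pi_pos
  have hInt : ∀ a b : ℝ, IntervalIntegrable (fun θ : ℝ => |Real.cos θ|) volume a b :=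
    fun a b => (Real.continuous_cos.abs).intervalIntegrable a b
  have e1 : ∫ θ in (0:ℝ)..(π/2), |Real.cos θ| = 1 := by
    rw [intervalIntegral.integral_congr (g := Real.cos) ?_, integral_cos]
    · simp
    · intro x hx
      rw [Set.uIcc_of_le (by positivity)] at hx
      exact abs_of_nonneg (Real.cos_nonneg_of_mem_Icc ⟨by linarith [hx.1], hx.2⟩)
  have e2 : ∫ θ in (π/2)..(3*(π/2)), |Real.cos θ| = 2 := by
    rw [intervalIntegral.integral_congr (g := fun θ => -Real.cos θ) ?_]
    · rw [intervalIntegral.integral_neg, integral_cos]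
      have h32 : Real.sin (3*(π/2)) = -1 := by
        have : (3:ℝ)*(π/2) = π/2 + π := by ring
        rw [this, Real.sin_add_pi, Real.sin_pi_div_two]
      rw [h32, Real.sin_pi_div_two]; ring
    · intro x hx
      rw [Set.uIcc_of_le (by linarith)] at hx
      exact abs_of_nonpos (Real.cos_nonpos_of_pi_div_two_le_of_le hx.1 (by linarith [hx.2]))
  have e3 : ∫ θ in (3*(π/2))..(2*π), |Real.cos θ| = 1 := by
    rw [intervalIntegral.integral_congr (g := Real.cos) ?_, integral_cos]
    · have h32 : Real.sin (3*(π/2)) = -1 := by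
        have : (3:ℝ)*(π/2) = π/2 + π := by ring
        rw [this, Real.sin_add_pi, Real.sin_pi_div_two]
      rw [h32, Real.sin_two_pi]; ring
    · intro x hx
      rw [Set.uIcc_of_le (by linarith)] at hx
      have h2 : Real.cos (x - 2*π) = Real.cos x := Real.cos_sub_two_pi x
      show |Real.cos x| = Real.cos x
      rw [← h2]
      refine abs_of_nonneg (Real.cos_nonneg_of_mem_Icc ⟨?_, ?_⟩)
      · have := hx.1; linarith
      · have := hx.2; linarith
  have := intervalIntegral.integral_add_adjacent_intervals (hInt 0 (π/2)) (hInt (π/2) (3*(π/2)))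
  have h2 := intervalIntegral.integral_add_adjacent_intervals (hInt 0 (3*(π/2))) (hInt (3*(π/2)) (2*π))
  rw [← h2, ← this, e1, e2, e3]; norm_num

lemma polar_decomp (a b : ℝ) (hz : ¬(a = 0 ∧ b = 0)) :
    ∃ r φ : ℝ, 0 < r ∧ r^2 = a^2 + b^2 ∧
      ∀ θ, a * Real.cos θ + b * Real.sin θ = r * Real.cos (θ - φ) := by
  set z : ℂ := ⟨a, b⟩ with hzdef
  have hz0 : z ≠ 0 := by
    simp only [ne_eq, Complex.ext_iff, Complex.zero_re, Complex.zero_im]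
    tauto
  refine ⟨‖z‖, Complex.arg z, ?_, ?_, ?_⟩
  · exact norm_pos_iff.mpr hz0
  · rw [Complex.sq_norm, Complex.normSq_mk]; ring
  · intro θ
    have hcos : Real.cos (Complex.arg z) = a / ‖z‖ := by
      rw [Complex.cos_arg hz0]
    have hsin : Real.sin (Complex.arg z) = b / ‖z‖ := by
      rw [Complex.sin_arg]
    have habs : ‖z‖ ≠ 0 := norm_ne_zero_iff.mpr hz0
    rw [Real.cos_sub, hcos, hsin]
    field_simp

lemma intervalIntegrable_of_bdd {F : ℝ → ℝ} (hF : Measurable F) (hb : ∀ x, ‖F x‖ ≤ 1)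
    (a b : ℝ) : IntervalIntegrable F volume a b := by
  rw [intervalIntegrable_iff]
  refine Measure.integrableOn_of_bounded ?_ hF.aestronglyMeasurable (ae_of_all _ hb)
  rw [Set.uIoc, Real.volume_Ioc]
  exact ENNReal.ofReal_ne_top

lemma circle_upper (a b : ℝ) (hab : a^2 + b^2 ≤ 1) :
    ∫ θ in (0:ℝ)..(2*π), |a * Real.cos θ + b * Real.sin θ| ≤ 4 := by
  by_cases hz : a = 0 ∧ b = 0
  · obtain ⟨ha, hb⟩ := hz
    subst ha; subst hb
    simp
  · obtain ⟨r, φ, hr, hr2, hrep⟩ := polar_decomp a b hz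
    have hr1 : r ≤ 1 := by nlinarith
    have hle : ∀ θ ∈ Set.Icc (0:ℝ) (2*π),
        |a * Real.cos θ + b * Real.sin θ| ≤ |Real.cos (θ - φ)| := by
      intro θ _
      rw [hrep θ, abs_mul, abs_of_pos hr]
      calc r * |Real.cos (θ - φ)| ≤ 1 * |Real.cos (θ - φ)| := by
            apply mul_le_mul_of_nonneg_right hr1 (abs_nonneg _)
        _ = |Real.cos (θ - φ)| := one_mul _
    have hint1 : IntervalIntegrable (fun θ => |a * Real.cos θ + b * Real.sin θ|) volume 0 (2*π) :=
      (Continuous.abs (by continuity)).intervalIntegrable _ _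
    have hint2 : IntervalIntegrable (fun θ => |Real.cos (θ - φ)|) volume 0 (2*π) :=
      (Continuous.abs (by continuity)).intervalIntegrable _ _
    have pi_pos := Real.pi_pos
    calc ∫ θ in (0:ℝ)..(2*π), |a * Real.cos θ + b * Real.sin θ|
        ≤ ∫ θ in (0:ℝ)..(2*π), |Real.cos (θ - φ)| :=
          intervalIntegral.integral_mono_on (by linarith) hint1 hint2 hle
      _ = ∫ θ in (0-φ)..(2*π-φ), |Real.cos θ| := by
          rw [intervalIntegral.integral_comp_sub_right (fun θ => |Real.cos θ|) φ]
      _ = ∫ θ in (0:ℝ)..(2*π), |Real.cos θ| := by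
          have := abs_cos_periodic.intervalIntegral_add_eq (0-φ) 0
          rw [show (0-φ) + 2*π = 2*π - φ by ring, zero_add] at this
          exact this
      _ = 4 := integral_abs_cos_two_pi

lemma circle_lower (a b s : ℝ) (hab : a^2 + b^2 ≤ 1) (hs0 : 0 ≤ s) (hs1 : s ≤ 1) :
    4 * s ≤ ∫ θ in (0:ℝ)..(2*π), (if |a * Real.cos θ + b * Real.sin θ| ≤ s then (1:ℝ) else 0) := by
  have pi_gt := Real.pi_gt_three
  by_cases hz : a = 0 ∧ b = 0
  · obtain ⟨ha, hb⟩ := hz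
    subst ha; subst hb
    simp only [zero_mul, add_zero, abs_zero, hs0, if_true, zero_add]
    rw [intervalIntegral.integral_const]
    simp only [smul_eq_mul, mul_one]
    linarith
  · obtain ⟨r, φ, hr, hr2, hrep⟩ := polar_decomp a b hz
    have hr1 : r ≤ 1 := by nlinarith
    set knd : ℝ → ℝ := fun θ => if |Real.cos θ| ≤ s then (1:ℝ) else 0 with hknd
    have hkm : Measurable knd := by
      apply Measurable.ite _ measurable_const measurable_const
      exact measurableSet_le (Real.continuous_cos.abs.measurable) measurable_const
    have hkb : ∀ x, ‖knd x‖ ≤ 1 := by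
      intro x; rw [hknd]; dsimp only; split <;> simp
    have hknonneg : ∀ x, 0 ≤ knd x := by
      intro x; rw [hknd]; dsimp only; split <;> norm_num
    have hki : ∀ a b : ℝ, IntervalIntegrable knd volume a b := intervalIntegrable_of_bdd hkm hkb
    -- pointwise: knd (θ - φ) ≤ ind θ
    have hpt : ∀ θ ∈ Set.Icc (0:ℝ) (2*π), knd (θ - φ) ≤
        (if |a * Real.cos θ + b * Real.sin θ| ≤ s then (1:ℝ) else 0) := by
      intro θ _
      rw [hknd]; dsimp only
      by_cases h : |Real.cos (θ - φ)| ≤ s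
      · rw [if_pos h, if_pos]
        rw [hrep θ, abs_mul, abs_of_pos hr]
        calc r * |Real.cos (θ - φ)| ≤ 1 * s := by
              apply mul_le_mul hr1 h (abs_nonneg _) zero_le_one
          _ = s := one_mul s
      · rw [if_neg h]; split <;> norm_num
    have hindm : Measurable (fun θ => if |a * Real.cos θ + b * Real.sin θ| ≤ s then (1:ℝ) else 0) := by
      apply Measurable.ite _ measurable_const measurable_const
      exact measurableSet_le (Continuous.measurable (by continuity)) measurable_const
    have hindb : ∀ x : ℝ, ‖(if |a * Real.cos x + b * Real.sin x| ≤ s then (1:ℝ) else 0)‖ ≤ 1 := by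
      intro x; split <;> simp
    have step1 : ∫ θ in (0:ℝ)..(2*π), knd (θ - φ) ≤
        ∫ θ in (0:ℝ)..(2*π), (if |a * Real.cos θ + b * Real.sin θ| ≤ s then (1:ℝ) else 0) := by
      apply intervalIntegral.integral_mono_on (by linarith)
        (intervalIntegrable_of_bdd (hkm.comp (measurable_id.sub_const φ)) (fun x => hkb _) _ _)
        (intervalIntegrable_of_bdd hindm hindb _ _) hpt
    have hkp : Function.Periodic knd (2*π) := fun x => by
      rw [hknd]; dsimp only; rw [Real.cos_add_two_pi]
    have step2 : ∫ θ in (0:ℝ)..(2*π), knd (θ - φ) = ∫ θ in (0:ℝ)..(2*π), knd θ := by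
      rw [intervalIntegral.integral_comp_sub_right knd φ]
      have := hkp.intervalIntegral_add_eq (0-φ) 0
      rw [show (0-φ) + 2*π = 2*π - φ by ring, zero_add] at this
      exact this
    -- split [0, 2π] at the four points
    have hs2 : s ≤ π/2 := by linarith
    have mid1 : ∫ θ in (π/2 - s)..(π/2 + s), knd θ = 2*s := by
      rw [intervalIntegral.integral_congr (g := fun _ => (1:ℝ)) ?_]
      · rw [intervalIntegral.integral_const]; simp; ring
      · intro x hx
        rw [Set.uIcc_of_le (by linarith)] at hx
        have hcx : |Real.cos x| ≤ s := by
          have h1 : Real.cos x = -Real.sin (x - π/2) := by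
            rw [show x = (x - π/2) + π/2 by ring, Real.cos_add_pi_div_two]
            ring_nf
          rw [h1, abs_neg]
          calc |Real.sin (x - π/2)| ≤ |x - π/2| := Real.abs_sin_le_abs
            _ ≤ s := by rw [abs_le]; constructor <;> [linarith [hx.1]; linarith [hx.2]]
        rw [hknd]; dsimp only; rw [if_pos hcx]
    have mid2 : ∫ θ in (3*(π/2) - s)..(3*(π/2) + s), knd θ = 2*s := by
      rw [intervalIntegral.integral_congr (g := fun _ => (1:ℝ)) ?_]
      · rw [intervalIntegral.integral_const]; simp; ring
      · intro x hx
        rw [Set.uIcc_of_le (by linarith)] at hx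
        have hcx : |Real.cos x| ≤ s := by
          have h1 : Real.cos x = Real.sin (x - 3*(π/2)) := by
            rw [show x = (x - 3*(π/2)) + (π/2 + π) by ring, ← add_assoc,
              Real.cos_add_pi, Real.cos_add_pi_div_two]
            ring_nf
          rw [h1]
          calc |Real.sin (x - 3*(π/2))| ≤ |x - 3*(π/2)| := Real.abs_sin_le_abs
            _ ≤ s := by rw [abs_le]; constructor <;> [linarith [hx.1]; linarith [hx.2]]
        rw [hknd]; dsimp only; rw [if_pos hcx]
    have nn : ∀ a b : ℝ, a ≤ b → 0 ≤ ∫ θ in a..b, knd θ := by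
      intro a b hab'
      apply intervalIntegral.integral_nonneg hab' (fun x _ => hknonneg x)
    have sp1 := intervalIntegral.integral_add_adjacent_intervals
      (hki 0 (π/2 - s)) (hki (π/2 - s) (π/2 + s))
    have sp2 := intervalIntegral.integral_add_adjacent_intervals
      (hki 0 (π/2 + s)) (hki (π/2 + s) (3*(π/2) - s))
    have sp3 := intervalIntegral.integral_add_adjacent_intervals
      (hki 0 (3*(π/2) - s)) (hki (3*(π/2) - s) (3*(π/2) + s))
    have sp4 := intervalIntegral.integral_add_adjacent_intervals
      (hki 0 (3*(π/2) + s)) (hki (3*(π/2) + s) (2*π))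
    have n1 := nn 0 (π/2 - s) (by linarith)
    have n2 := nn (π/2 + s) (3*(π/2) - s) (by linarith)
    have n3 := nn (3*(π/2) + s) (2*π) (by linarith)
    have total : 4*s ≤ ∫ θ in (0:ℝ)..(2*π), knd θ := by
      rw [← sp4, ← sp3, ← sp2, ← sp1, mid1, mid2]
      linarith
    linarith [step1, step2, total]

variable {F : Type*} [NormedAddCommGroup F] [InnerProductSpace ℝ F] [CompleteSpace F]

lemma taylor_bound (L : ℝ) (hL : 0 < L) (S : F → ℝ) (hS : Differentiable ℝ S)
    (hLip : ∀ x y : F, ‖gradient S x - gradient S y‖ ≤ L * ‖x - y‖)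
    (x h : F) : |S (x + h) - S x - ⟪gradient S x, h⟫| ≤ L / 2 * ‖h‖^2 := by
  have hgradcont : Continuous (fun y => gradient S y) := by
    have : LipschitzWith L.toNNReal (fun y => gradient S y) := by
      apply LipschitzWith.of_dist_le_mul
      intro a b
      rw [dist_eq_norm, dist_eq_norm]
      calc ‖gradient S a - gradient S b‖ ≤ L * ‖a - b‖ := hLip a b
        _ = L.toNNReal * ‖a - b‖ := by rw [Real.coe_toNNReal L hL.le]
    exact this.continuous
  set f : ℝ → ℝ := fun t => ⟪gradient S (x + t • h), h⟫ with hf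
  have hfc : Continuous f := by
    apply Continuous.inner (hgradcont.comp (by continuity)) continuous_const
  have hderiv : ∀ t ∈ Set.uIcc (0:ℝ) 1, HasDerivAt (fun t : ℝ => S (x + t • h)) (f t) t := by
    intro t _
    have hcurve : HasDerivAt (fun t : ℝ => x + t • h) h t := by
      simpa using ((hasDerivAt_id t).smul_const h).const_add x
    have hgrad : HasGradientAt S (gradient S (x + t • h)) (x + t • h) :=
      (hS (x + t • h)).hasGradientAt
    have hfder := hgrad.hasFDerivAt
    have := hfder.comp_hasDerivAt t hcurve
    simpa [hf, Function.comp_def] using this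
  have hftc : S (x + h) - S x = ∫ t in (0:ℝ)..1, f t := by
    have := intervalIntegral.integral_eq_sub_of_hasDerivAt hderiv
      (hfc.intervalIntegrable 0 1)
    rw [this]
    norm_num
  have hsub : S (x + h) - S x - ⟪gradient S x, h⟫
      = ∫ t in (0:ℝ)..1, (f t - ⟪gradient S x, h⟫) := by
    rw [intervalIntegral.integral_sub (hfc.intervalIntegrable 0 1)
      (intervalIntegrable_const), intervalIntegral.integral_const]
    rw [← hftc]; simp
  rw [hsub]
  have hbound : ∀ t ∈ Set.Icc (0:ℝ) 1, |f t - ⟪gradient S x, h⟫| ≤ (L * ‖h‖^2) * t := by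
    intro t ht
    have : f t - ⟪gradient S x, h⟫ = ⟪gradient S (x + t • h) - gradient S x, h⟫ := by
      rw [inner_sub_left]
    rw [this]
    calc |⟪gradient S (x + t • h) - gradient S x, h⟫|
        ≤ ‖gradient S (x + t • h) - gradient S x‖ * ‖h‖ := abs_real_inner_le_norm _ _
      _ ≤ (L * ‖x + t • h - x‖) * ‖h‖ :=
          mul_le_mul_of_nonneg_right (hLip _ _) (norm_nonneg _)
      _ = (L * ‖h‖^2) * t := by
          rw [show x + t • h - x = t • h by abel, norm_smul]
          simp [abs_of_nonneg ht.1]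
          ring
  calc |∫ t in (0:ℝ)..1, (f t - ⟪gradient S x, h⟫)|
      ≤ ∫ t in (0:ℝ)..1, |f t - ⟪gradient S x, h⟫| := by
        apply intervalIntegral.abs_integral_le_integral_abs zero_le_one
    _ ≤ ∫ t in (0:ℝ)..1, (L * ‖h‖^2) * t := by
        apply intervalIntegral.integral_mono_on zero_le_one
          ((hfc.sub continuous_const).abs.intervalIntegrable 0 1)
          ((continuous_const.mul continuous_id).intervalIntegrable 0 1) hbound
    _ = L / 2 * ‖h‖^2 := by
        rw [intervalIntegral.integral_const_mul, integral_id]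
        ring
end Aux

set_option maxHeartbeats 1000000 in
/-- with `v₁ = ∇S(x_t)/‖∇S(x_t)‖`, `c = ∫_S |⟪v₁,u⟫| dσ` and
`q(δ) = σ({u : |⟪∇S(x_t),u⟫| ≤ Lδ/2})`, if `2q(δ) ≤ c` then
`⟪g(δ), v₁⟫ ≥ (1 − (1/2)(3q(δ)/c)²) ‖g(δ)‖`. -/
theorem stmt_2 (d : ℕ) (hd : 2 ≤ d) (L : ℝ) (hL : 0 < L)
    (S : EuclideanSpace ℝ (Fin d) → ℝ) (hS : Differentiable ℝ S)
    (hLip : ∀ x y : EuclideanSpace ℝ (Fin d),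
      ‖gradient S x - gradient S y‖ ≤ L * ‖x - y‖)
    (xt : EuclideanSpace ℝ (Fin d)) (hxt : S xt = 0) (hgrad : gradient S xt ≠ 0)
    (v₁ : EuclideanSpace ℝ (Fin d)) (hv₁ : v₁ = ‖gradient S xt‖⁻¹ • gradient S xt)
    (c : ℝ) (hc : c = ∫ u, |⟪v₁, u⟫| ∂(sphereUniform d))
    (q : ℝ → ℝ)
    (hq : ∀ δ : ℝ, q δ =
      ((sphereUniform d) {u | |⟪gradient S xt, u⟫| ≤ L * δ / 2}).toReal)
    (δ : ℝ) (hδ : 0 < δ) (hband : 2 * q δ ≤ c) :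
    ⟪gEst d S xt δ, v₁⟫ ≥ (1 - (1 / 2) * (3 * q δ / c) ^ 2) * ‖gEst d S xt δ‖ := by
  classical
  rcases eq_or_ne (μH[(d : ℝ) - 1] (Metric.sphere (0 : EuclideanSpace ℝ (Fin d)) 1)) 0
    with hM0 | hM0
  · have hzero : sphereUniform d = 0 := by
      unfold sphereUniform
      rw [Measure.restrict_eq_zero.mpr hM0, smul_zero]
    have hgz : gEst d S xt δ = 0 := by
      unfold gEst; rw [hzero, integral_zero_measure]
    rw [hgz]
    simp
  rcases eq_or_ne (μH[(d : ℝ) - 1] (Metric.sphere (0 : EuclideanSpace ℝ (Fin d)) 1)) ⊤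
    with hMt | hMt
  · have hzero : sphereUniform d = 0 := by
      unfold sphereUniform
      rw [hMt, ENNReal.inv_top, zero_smul]
    have hgz : gEst d S xt δ = 0 := by
      unfold gEst; rw [hzero, integral_zero_measure]
    rw [hgz]
    simp
  have hprob : IsProbabilityMeasure (sphereUniform d) := by
    constructor
    unfold sphereUniform
    rw [Measure.smul_apply, Measure.restrict_apply_univ, smul_eq_mul,
      ENNReal.inv_mul_cancel hM0 hMt]
  have hae : ∀ᵐ u ∂(sphereUniform d), ‖u‖ = 1 := by
    rw [ae_iff]
    unfold sphereUniform
    rw [Measure.smul_apply, Measure.restrict_apply']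
    · have : {u : EuclideanSpace ℝ (Fin d) | ¬ ‖u‖ = 1} ∩ Metric.sphere 0 1 = ∅ := by
        ext u
        simp [mem_sphere_iff_norm]
      rw [this, measure_empty, smul_zero]
    · exact (Metric.isClosed_sphere (x := (0 : EuclideanSpace ℝ (Fin d))) (ε := 1)).measurableSet
  set σ := sphereUniform d with hσdef
  have hN0' : 0 < ‖gradient S xt‖ := norm_pos_iff.mpr hgrad
  have hv₁n : ‖v₁‖ = 1 := by
    rw [hv₁, norm_smul, norm_inv, norm_norm, inv_mul_cancel₀ hN0'.ne']
  have hgradv : gradient S xt = ‖gradient S xt‖ • v₁ := by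
    rw [hv₁, smul_smul, mul_inv_cancel₀ hN0'.ne', one_smul]
  set N := ‖gradient S xt‖ with hNdef
  have hN0 : 0 < N := hN0'
  set T : EuclideanSpace ℝ (Fin d) → ℝ := fun u => ⟪v₁, u⟫ with hTdef
  have hinner : ∀ u, ⟪gradient S xt, u⟫ = N * T u := fun u => by
    rw [hgradv, real_inner_smul_left]
  set τ := L * δ / (2 * N) with hτdef
  have hτ0 : 0 < τ := by positivity
  set s₀ := min τ 1 with hs₀def
  have hs₀0 : 0 < s₀ := lt_min hτ0 one_pos
  have hs₀1 : s₀ ≤ 1 := min_le_right _ _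
  set A := {u : EuclideanSpace ℝ (Fin d) | |⟪gradient S xt, u⟫| ≤ L * δ / 2} with hAdef
  have hAmeas : MeasurableSet A := by
    apply measurableSet_le
    · exact (Continuous.abs (Continuous.inner continuous_const continuous_id)).measurable
    · exact measurable_const
  have hsgnm : Measurable sgn := by
    unfold sgn
    exact Measurable.ite (measurableSet_lt measurable_const measurable_id)
      measurable_const measurable_const
  set sg : EuclideanSpace ℝ (Fin d) → ℝ := fun u => sgn (S (xt + δ • u)) with hsgdef
  have hsgm : Measurable sg :=
    hsgnm.comp ((hS.continuous.comp (continuous_const.add (continuous_id.const_smul δ))).measurable)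
  have hsgabs : ∀ u, |sg u| = 1 := by
    intro u
    rw [hsgdef]
    unfold sgn
    dsimp only
    split <;> norm_num
  have hTm : Measurable T := (Continuous.inner continuous_const continuous_id).measurable
  have hTle : ∀ u, |T u| ≤ ‖u‖ := by
    intro u
    calc |T u| ≤ ‖v₁‖ * ‖u‖ := abs_real_inner_le_norm _ _
      _ = ‖u‖ := by rw [hv₁n, one_mul]
  -- sign agreement off the band
  have hagree : ∀ u, ‖u‖ = 1 → u ∉ A → sg u * T u = |T u| := by
    intro u hu hnA
    have htay := taylor_bound L hL S hS hLip xt (δ • u)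
    rw [hxt, sub_zero, norm_smul, hu, mul_one, real_inner_smul_right, hinner u,
      Real.norm_eq_abs, abs_of_pos hδ] at htay
    have hband' : L * δ / 2 < N * |T u| := by
      have : ¬ |⟪gradient S xt, u⟫| ≤ L * δ / 2 := hnA
      rw [hinner u, abs_mul, abs_of_pos hN0] at this
      linarith [not_le.mp this]
    rcases lt_trichotomy (T u) 0 with hT0 | hT0 | hT0
    · have habs : |T u| = -T u := abs_of_neg hT0
      have hSneg : S (xt + δ • u) < 0 := by
        have h1 : S (xt + δ • u) - δ * (N * T u) ≤ L / 2 * δ ^ 2 := (abs_le.mp htay).2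
        have h2 : δ * (N * T u) = -(δ * (N * |T u|)) := by rw [habs]; ring
        nlinarith
      have : sg u = -1 := by
        rw [hsgdef]; unfold sgn; dsimp only; rw [if_neg (by linarith)]
      rw [this, habs]; ring
    · exfalso; rw [hT0] at hband'; simp at hband'; nlinarith
    · have habs : |T u| = T u := abs_of_pos hT0
      have hSpos : 0 < S (xt + δ • u) := by
        have h1 : -(L / 2 * δ ^ 2) ≤ S (xt + δ • u) - δ * (N * T u) := (abs_le.mp htay).1
        have h2 : δ * (N * T u) = δ * (N * |T u|) := by rw [habs]
        nlinarith
      have : sg u = 1 := by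
        rw [hsgdef]; unfold sgn; dsimp only; rw [if_pos hSpos]
      rw [this, habs]; ring
  -- integrability facts
  have hbnd : ∀ (f : EuclideanSpace ℝ (Fin d) → ℝ),
      AEStronglyMeasurable f σ → (∀ᵐ u ∂σ, |f u| ≤ 1) → Integrable f σ := by
    intro f hm hb
    apply Integrable.mono' (integrable_const (1:ℝ)) hm
    filter_upwards [hb] with u hu
    rwa [Real.norm_eq_abs]
  have hTae : ∀ᵐ u ∂σ, |T u| ≤ 1 := by
    filter_upwards [hae] with u hu
    calc |T u| ≤ ‖u‖ := hTle u
      _ = 1 := hu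
  have hintT : Integrable (fun u => |T u|) σ :=
    hbnd _ hTm.abs.aestronglyMeasurable (by filter_upwards [hTae] with u hu; rwa [abs_abs])
  have hintsgT : Integrable (fun u => sg u * T u) σ := by
    apply hbnd _ (hsgm.mul hTm).aestronglyMeasurable
    filter_upwards [hTae] with u hu
    rw [Pi.mul_apply, abs_mul, hsgabs u, one_mul]; exact hu
  have hgint : Integrable (fun u => sg u • u) σ := by
    apply Integrable.mono' (integrable_const (1:ℝ))
      ((hsgm.smul measurable_id).aestronglyMeasurable)
    filter_upwards [hae] with u hu
    rw [Pi.smul_apply', id_eq, norm_smul, hu, mul_one, Real.norm_eq_abs, hsgabs u]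
  have hc0 : 0 ≤ c := by
    rw [hc]; exact integral_nonneg (fun u => abs_nonneg _)
  -- representation of the inner product
  have hrep : ∀ h : EuclideanSpace ℝ (Fin d),
      ⟪gEst d S xt δ, h⟫ = ∫ u, sg u * ⟪h, u⟫ ∂σ := by
    intro h
    rw [real_inner_comm]
    unfold gEst
    rw [← hσdef, ← integral_inner hgint h]
    congr 1
    ext u
    rw [real_inner_smul_right]
  -- Step C : ‖g‖ ≤ c
  have hgc : ‖gEst d S xt δ‖ ≤ c := by
    rcases eq_or_ne (gEst d S xt δ) 0 with h0 | h0
    · rw [h0, norm_zero]; exact hc0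
    · have hgn0 : (0:ℝ) < ‖gEst d S xt δ‖ := norm_pos_iff.mpr h0
      set h : EuclideanSpace ℝ (Fin d) := ‖gEst d S xt δ‖⁻¹ • gEst d S xt δ with hhdef
      have hhn : ‖h‖ = 1 := by
        rw [hhdef, norm_smul, norm_inv, norm_norm, inv_mul_cancel₀ hgn0.ne']
      have h1 : ‖gEst d S xt δ‖ = ⟪gEst d S xt δ, h⟫ := by
        rw [hhdef, real_inner_smul_right, real_inner_self_eq_norm_mul_norm]
        field_simp
      have hinth : Integrable (fun u => sg u * ⟪h, u⟫) σ := by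
        apply hbnd _ (hsgm.mul
          (Continuous.inner continuous_const continuous_id).measurable).aestronglyMeasurable
        filter_upwards [hae] with u hu
        simp only [Pi.mul_apply, id_eq]
        rw [abs_mul, hsgabs u, one_mul]
        calc |⟪h, u⟫| ≤ ‖h‖ * ‖u‖ := abs_real_inner_le_norm _ _
          _ = 1 := by rw [hhn, hu, mul_one]
      have hinth2 : Integrable (fun u => |⟪h, u⟫|) σ := by
        apply hbnd _ (Continuous.inner continuous_const
          continuous_id).measurable.abs.aestronglyMeasurable
        filter_upwards [hae] with u hu
        rw [abs_abs]
        calc |⟪h, u⟫| ≤ ‖h‖ * ‖u‖ := abs_real_inner_le_norm _ _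
          _ = 1 := by rw [hhn, hu, mul_one]
      have h3 : ∫ u, sg u * ⟪h, u⟫ ∂σ ≤ ∫ u, |⟪h, u⟫| ∂σ := by
        apply integral_mono hinth hinth2
        intro u
        calc sg u * ⟪h, u⟫ ≤ |sg u * ⟪h, u⟫| := le_abs_self _
          _ = |⟪h, u⟫| := by rw [abs_mul, hsgabs u, one_mul]
      have h4 : ∫ u, |⟪h, u⟫| ∂σ = c := by
        rw [hc]
        exact integral_inner_invariant h v₁ (by rw [hhn, hv₁n]) (fun t => |t|)
      rw [h1, hrep h]
      linarith
  -- Step B : c - a ≤ 2B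
  set B := ∫ u in A, |T u| ∂σ with hBdef
  have hB0 : 0 ≤ B := by
    rw [hBdef]
    exact setIntegral_nonneg hAmeas (fun u _ => abs_nonneg _)
  have haB : c - ⟪gEst d S xt δ, v₁⟫ ≤ 2 * B := by
    have hrepv : ⟪gEst d S xt δ, v₁⟫ = ∫ u, sg u * T u ∂σ := hrep v₁
    have hdiff : c - ⟪gEst d S xt δ, v₁⟫ = ∫ u, (|T u| - sg u * T u) ∂σ := by
      rw [hrepv, hc, hTdef, ← integral_sub hintT hintsgT]
    have hsplit : ∫ u, (|T u| - sg u * T u) ∂σ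
        = (∫ u in A, (|T u| - sg u * T u) ∂σ) + ∫ u in Aᶜ, (|T u| - sg u * T u) ∂σ :=
      (integral_add_compl hAmeas (hintT.sub hintsgT)).symm
    have hcompl : ∫ u in Aᶜ, (|T u| - sg u * T u) ∂σ = 0 := by
      apply integral_eq_zero_of_ae
      rw [EventuallyEq, ae_restrict_iff' hAmeas.compl]
      filter_upwards [hae] with u hu hmem
      rw [Pi.zero_apply, sub_eq_zero, hagree u hu hmem]
    have hsetle : ∫ u in A, (|T u| - sg u * T u) ∂σ ≤ ∫ u in A, 2 * |T u| ∂σ := by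
      apply setIntegral_mono_on (hintT.sub hintsgT).integrableOn
        (hintT.const_mul 2).integrableOn hAmeas
      intro u _
      have : -(sg u * T u) ≤ |T u| := by
        calc -(sg u * T u) ≤ |sg u * T u| := neg_le_abs _
          _ = |T u| := by rw [abs_mul, hsgabs u, one_mul]
      simp only [Pi.sub_apply]
      linarith
    have h2B : ∫ u in A, 2 * |T u| ∂σ = 2 * B := by
      rw [hBdef]
      exact MeasureTheory.integral_const_mul 2 (fun u => |T u|)
    linarith [hdiff, hsplit, hcompl, hsetle, h2B]
  -- Step D : B ≤ s₀ * q δ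
  have hqnonneg : 0 ≤ q δ := by rw [hq δ]; exact ENNReal.toReal_nonneg
  have hBle : B ≤ s₀ * q δ := by
    have hfin : σ A ≠ ⊤ := measure_ne_top σ A
    have hbound : ∀ᵐ u ∂(σ.restrict A), ‖|T u|‖ ≤ s₀ := by
      rw [ae_restrict_iff' hAmeas]
      filter_upwards [hae] with u hu hmem
      rw [Real.norm_eq_abs, abs_abs]
      apply le_min
      · have : |⟪gradient S xt, u⟫| ≤ L * δ / 2 := hmem
        rw [hinner u, abs_mul, abs_of_pos hN0] at this
        rw [hτdef, show L * δ / (2 * N) = (L * δ / 2) / N by ring, le_div_iff₀ hN0]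
        linarith
      · calc |T u| ≤ ‖u‖ := hTle u
          _ = 1 := hu
    have := norm_setIntegral_le_of_norm_le_const_ae (lt_top_iff_ne_top.mpr hfin) hbound
    calc B ≤ ‖∫ u in A, |T u| ∂σ‖ := le_abs_self _
      _ ≤ s₀ * (σ A).toReal := this
      _ = s₀ * q δ := by rw [hq δ]
  -- orthonormal pair
  have hv₁0 : v₁ ≠ 0 := by
    intro h; rw [h, norm_zero] at hv₁n; norm_num at hv₁n
  obtain ⟨w, hwn, hvw⟩ : ∃ w : EuclideanSpace ℝ (Fin d), ‖w‖ = 1 ∧ ⟪v₁, w⟫ = 0 := by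
    have hne : (Submodule.span ℝ {v₁})ᗮ ≠ ⊥ := by
      intro hbot
      have htop : (Submodule.span ℝ {v₁}) = ⊤ := Submodule.orthogonal_eq_bot_iff.mp hbot
      have h1 := finrank_span_singleton (K := ℝ) hv₁0
      rw [htop] at h1
      rw [finrank_top, finrank_euclideanSpace_fin] at h1
      omega
    obtain ⟨w₀, hw₀mem, hw₀ne⟩ := Submodule.exists_mem_ne_zero_of_ne_bot hne
    have hw₀n : (0:ℝ) < ‖w₀‖ := norm_pos_iff.mpr hw₀ne
    refine ⟨‖w₀‖⁻¹ • w₀, ?_, ?_⟩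
    · rw [norm_smul, norm_inv, norm_norm, inv_mul_cancel₀ hw₀n.ne']
    · rw [real_inner_smul_right,
        Submodule.mem_orthogonal_singleton_iff_inner_right.mp hw₀mem, mul_zero]
  -- Bessel
  have hwv : ⟪w, v₁⟫ = 0 := by rw [real_inner_comm]; exact hvw
  have hbess : ∀ u : EuclideanSpace ℝ (Fin d), ‖u‖ = 1 →
      ⟪v₁, u⟫^2 + ⟪w, u⟫^2 ≤ 1 := by
    intro u hu
    set p := ⟪v₁, u⟫ • v₁ + ⟪w, u⟫ • w with hp
    have hup : ⟪u, p⟫ = ⟪v₁, u⟫^2 + ⟪w, u⟫^2 := by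
      rw [hp, inner_add_right, real_inner_smul_right, real_inner_smul_right,
        real_inner_comm u v₁, real_inner_comm u w]
      ring
    have hpp : ⟪p, p⟫ = ⟪v₁, u⟫^2 + ⟪w, u⟫^2 := by
      simp only [hp, inner_add_right, inner_add_left, real_inner_smul_left,
        real_inner_smul_right, real_inner_self_eq_norm_mul_norm, norm_smul,
        Real.norm_eq_abs, hv₁n, hwn, hvw, hwv, mul_one]
      rw [abs_mul_abs_self, abs_mul_abs_self]
      ring
    have h0 : (0:ℝ) ≤ ⟪u - p, u - p⟫ := real_inner_self_nonneg
    rw [real_inner_sub_sub_self, hup, hpp, real_inner_self_eq_norm_mul_norm, hu] at h0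
    linarith
  -- the rotated unit vectors
  set xθ : ℝ → EuclideanSpace ℝ (Fin d) := fun θ => Real.cos θ • v₁ + Real.sin θ • w
    with hxθdef
  have hxθn : ∀ θ, ‖xθ θ‖ = 1 := by
    intro θ
    have h2 : ⟪xθ θ, xθ θ⟫ = 1 := by
      rw [hxθdef]
      dsimp only
      simp only [inner_add_right, inner_add_left, real_inner_smul_left,
        real_inner_smul_right, real_inner_self_eq_norm_mul_norm, norm_smul,
        Real.norm_eq_abs, hv₁n, hwn, hvw, hwv, mul_one]
      rw [abs_mul_abs_self, abs_mul_abs_self]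
      have := Real.sin_sq_add_cos_sq θ
      nlinarith [this]
    have h3 : ‖xθ θ‖ = Real.sqrt (‖xθ θ‖ * ‖xθ θ‖) := by
      rw [Real.sqrt_mul_self (norm_nonneg _)]
    rw [h3, ← real_inner_self_eq_norm_mul_norm, h2, Real.sqrt_one]
  have hxθinner : ∀ θ u, ⟪xθ θ, u⟫ = ⟪v₁, u⟫ * Real.cos θ + ⟪w, u⟫ * Real.sin θ := by
    intro θ u
    rw [hxθdef]
    dsimp only
    rw [inner_add_left, real_inner_smul_left, real_inner_smul_left]
    ring
  -- Fubini swap helper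
  set ν : Measure ℝ := volume.restrict (Set.Ioc 0 (2*Real.pi)) with hνdef
  haveI hνfin : IsFiniteMeasure ν := by
    constructor
    rw [hνdef, Measure.restrict_apply_univ, Real.volume_Ioc]
    exact ENNReal.ofReal_lt_top
  have hcontP : Continuous fun p : ℝ × EuclideanSpace ℝ (Fin d) => ⟪xθ p.1, p.2⟫ := by
    have hP : (fun p : ℝ × EuclideanSpace ℝ (Fin d) => ⟪xθ p.1, p.2⟫)
        = fun p => ⟪v₁, p.2⟫ * Real.cos p.1 + ⟪w, p.2⟫ * Real.sin p.1 := by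
      funext p; rw [hxθinner]
    rw [hP]
    exact ((Continuous.inner continuous_const continuous_snd).mul
        (Real.continuous_cos.comp continuous_fst)).add
      ((Continuous.inner continuous_const continuous_snd).mul
        (Real.continuous_sin.comp continuous_fst))
  have hIntP : ∀ f : ℝ → ℝ, Measurable f → (∀ x, |f x| ≤ 1) →
      Integrable (fun z : ℝ × EuclideanSpace ℝ (Fin d) => f ⟪xθ z.1, z.2⟫) (ν.prod σ) := by
    intro f hfm hfb
    apply Integrable.mono' (integrable_const (1:ℝ))
    · exact (hfm.comp hcontP.measurable).aestronglyMeasurable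
    · exact ae_of_all _ (fun z => by rw [Real.norm_eq_abs]; exact hfb _)
  have hswap : ∀ f : ℝ → ℝ, Measurable f → (∀ x, |f x| ≤ 1) →
      (∫ θ, (∫ u, f ⟪xθ θ, u⟫ ∂σ) ∂ν) = ∫ u, (∫ θ, f ⟪xθ θ, u⟫ ∂ν) ∂σ :=
    fun f hm hb => integral_integral_swap (f := fun θ u => f ⟪xθ θ, u⟫) (hIntP f hm hb)
  have hprodint : ∀ f : ℝ → ℝ, Measurable f → (∀ x, |f x| ≤ 1) →
      Integrable (fun u => ∫ θ, f ⟪xθ θ, u⟫ ∂ν) σ :=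
    fun f hm hb => Integrable.integral_prod_right (hIntP f hm hb)
  have hπ := Real.pi_pos
  have hν2π : (ν Set.univ).toReal = 2*Real.pi := by
    rw [hνdef, Measure.restrict_apply_univ, Real.volume_Ioc, ENNReal.toReal_ofReal (by linarith)]
    ring
  -- Step F : c ≤ 2/π
  set f₁ : ℝ → ℝ := fun t => min |t| 1 with hf₁def
  have hf₁m : Measurable f₁ := (continuous_abs.min continuous_const).measurable
  have hf₁b : ∀ x, |f₁ x| ≤ 1 := by
    intro x
    rw [hf₁def]
    dsimp only
    rw [abs_of_nonneg (le_min (abs_nonneg x) zero_le_one)]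
    exact min_le_right _ _
  have hf₁le : ∀ x, f₁ x ≤ |x| := fun x => min_le_left _ _
  have hf₁inv : ∀ θ, ∫ u, f₁ ⟪xθ θ, u⟫ ∂σ = c := by
    intro θ
    rw [integral_inner_invariant (xθ θ) v₁ (by rw [hxθn θ, hv₁n]) f₁]
    rw [hc]
    apply integral_congr_ae
    filter_upwards [hTae] with u hu
    rw [hf₁def]
    exact min_eq_left hu
  have hcπ : c ≤ 2 / Real.pi := by
    have hlhs : ∫ θ, (∫ u, f₁ ⟪xθ θ, u⟫ ∂σ) ∂ν = 2*Real.pi*c := by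
      have : (fun θ => ∫ u, f₁ ⟪xθ θ, u⟫ ∂σ) = fun _ => c := funext hf₁inv
      rw [this, integral_const, measureReal_def, hν2π, smul_eq_mul]
    have hrhs : ∫ u, (∫ θ, f₁ ⟪xθ θ, u⟫ ∂ν) ∂σ ≤ ∫ u, (4:ℝ) ∂σ := by
      apply integral_mono_ae (hprodint f₁ hf₁m hf₁b) (integrable_const 4)
      filter_upwards [hae] with u hu
      have hab := hbess u hu
      have hform : ∀ θ, f₁ ⟪xθ θ, u⟫ = f₁ (⟪v₁, u⟫ * Real.cos θ + ⟪w, u⟫ * Real.sin θ) := by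
        intro θ; rw [hxθinner]
      calc ∫ θ, f₁ ⟪xθ θ, u⟫ ∂ν
          = ∫ θ in (0:ℝ)..(2*Real.pi), f₁ (⟪v₁, u⟫ * Real.cos θ + ⟪w, u⟫ * Real.sin θ) := by
            rw [intervalIntegral.integral_of_le (by linarith)]
            rw [hνdef]
            apply integral_congr_ae
            exact ae_of_all _ (fun θ => hform θ)
        _ ≤ ∫ θ in (0:ℝ)..(2*Real.pi), |⟪v₁, u⟫ * Real.cos θ + ⟪w, u⟫ * Real.sin θ| := by
            apply intervalIntegral.integral_mono_on (by linarith)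
            · apply intervalIntegrable_of_bdd (F := fun θ =>
                f₁ (⟪v₁, u⟫ * Real.cos θ + ⟪w, u⟫ * Real.sin θ)) _ _
              · exact hf₁m.comp (by fun_prop)
              · intro x
                rw [Real.norm_eq_abs]
                exact hf₁b _
            · exact (Continuous.abs (by fun_prop)).intervalIntegrable _ _
            · exact fun x _ => hf₁le _
        _ ≤ 4 := circle_upper _ _ hab
    have h4 : ∫ u, (4:ℝ) ∂σ = 4 := by
      rw [integral_const, probReal_univ, one_smul]
    have hsw := hswap f₁ hf₁m hf₁b
    rw [hlhs] at hsw
    rw [h4] at hrhs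
    have hfin : 2*Real.pi*c ≤ 4 := by rw [hsw]; exact hrhs
    rw [le_div_iff₀ hπ]
    linarith
  -- Step E : (2/π) * s₀ ≤ q₀ ≤ q δ
  set f₂ : ℝ → ℝ := fun t => if |t| ≤ s₀ then (1:ℝ) else 0 with hf₂def
  have hf₂m : Measurable f₂ := by
    apply Measurable.ite _ measurable_const measurable_const
    exact measurableSet_le continuous_abs.measurable measurable_const
  have hf₂b : ∀ x, |f₂ x| ≤ 1 := by
    intro x
    rw [hf₂def]
    dsimp only
    split <;> norm_num
  set Sset := {u : EuclideanSpace ℝ (Fin d) | |T u| ≤ s₀} with hSsetdef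
  have hSmeas : MeasurableSet Sset := measurableSet_le hTm.abs measurable_const
  set q₀ := (σ Sset).toReal with hq₀def
  have hq₀0 : 0 ≤ q₀ := ENNReal.toReal_nonneg
  have hf₂inv : ∀ θ, ∫ u, f₂ ⟪xθ θ, u⟫ ∂σ = q₀ := by
    intro θ
    rw [integral_inner_invariant (xθ θ) v₁ (by rw [hxθn θ, hv₁n]) f₂]
    have hind : (fun u : EuclideanSpace ℝ (Fin d) => f₂ ⟪v₁, u⟫)
        = Set.indicator Sset (fun _ => (1:ℝ)) := by
      funext u
      rw [Set.indicator_apply, hf₂def]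
      rfl
    rw [hind, integral_indicator hSmeas, setIntegral_const, smul_eq_mul, mul_one, measureReal_def]
  have hq₀ge : 2 / Real.pi * s₀ ≤ q₀ := by
    have hlhs : ∫ θ, (∫ u, f₂ ⟪xθ θ, u⟫ ∂σ) ∂ν = 2*Real.pi*q₀ := by
      have : (fun θ => ∫ u, f₂ ⟪xθ θ, u⟫ ∂σ) = fun _ => q₀ := funext hf₂inv
      rw [this, integral_const, measureReal_def, hν2π, smul_eq_mul]
    have hrhs : ∫ u, (4*s₀:ℝ) ∂σ ≤ ∫ u, (∫ θ, f₂ ⟪xθ θ, u⟫ ∂ν) ∂σ := by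
      apply integral_mono_ae (integrable_const (4*s₀)) (hprodint f₂ hf₂m hf₂b)
      filter_upwards [hae] with u hu
      have hab := hbess u hu
      have hform : ∀ θ, f₂ ⟪xθ θ, u⟫
          = if |⟪v₁, u⟫ * Real.cos θ + ⟪w, u⟫ * Real.sin θ| ≤ s₀ then (1:ℝ) else 0 := by
        intro θ; rw [hxθinner, hf₂def]
      calc (4*s₀:ℝ)
          ≤ ∫ θ in (0:ℝ)..(2*Real.pi),
              (if |⟪v₁, u⟫ * Real.cos θ + ⟪w, u⟫ * Real.sin θ| ≤ s₀ then (1:ℝ) else 0) :=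
            circle_lower _ _ _ hab hs₀0.le hs₀1
        _ = ∫ θ, f₂ ⟪xθ θ, u⟫ ∂ν := by
            rw [intervalIntegral.integral_of_le (by linarith)]
            rw [hνdef]
            apply integral_congr_ae
            exact ae_of_all _ (fun θ => (hform θ).symm)
    have h4 : ∫ u, (4*s₀:ℝ) ∂σ = 4*s₀ := by
      rw [integral_const, probReal_univ, one_smul]
    have hsw := hswap f₂ hf₂m hf₂b
    rw [hlhs] at hsw
    rw [h4] at hrhs
    rw [← hsw] at hrhs
    rw [div_mul_eq_mul_div, div_le_iff₀ hπ]
    linarith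
  have hq₀le : q₀ ≤ q δ := by
    have hsub : Sset ⊆ A := by
      intro u hu
      have h1 : |T u| ≤ s₀ := hu
      have h2 : |⟪gradient S xt, u⟫| = N * |T u| := by
        rw [hinner u, abs_mul, abs_of_pos hN0]
      have h3 : s₀ ≤ τ := min_le_left _ _
      have h4 : N * τ = L * δ / 2 := by
        rw [hτdef]
        field_simp
      show |⟪gradient S xt, u⟫| ≤ L * δ / 2
      rw [h2, ← h4]
      have := mul_le_mul_of_nonneg_left (le_trans h1 h3) hN0.le
      linarith
    rw [hq₀def, hq δ]
    exact ENNReal.toReal_mono (measure_ne_top σ _) (measure_mono hsub)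
  -- final arithmetic
  have hsc : s₀ * c ≤ q δ := by
    calc s₀ * c ≤ s₀ * (2/Real.pi) := mul_le_mul_of_nonneg_left hcπ hs₀0.le
      _ = 2/Real.pi * s₀ := by ring
      _ ≤ q₀ := hq₀ge
      _ ≤ q δ := hq₀le
  rcases eq_or_lt_of_le hc0 with hceq | hcpos
  · have hg0 : gEst d S xt δ = 0 := by
      apply norm_le_zero_iff.mp
      rw [← hceq] at hgc
      exact hgc
    rw [hg0]
    simp
  · have hsq' : s₀ ≤ q δ / c := (le_div_iff₀ hcpos).mpr hsc
    have hBq2 : B ≤ q δ * q δ / c := by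
      calc B ≤ s₀ * q δ := hBle
        _ ≤ (q δ / c) * q δ := mul_le_mul_of_nonneg_right hsq' hqnonneg
        _ = q δ * q δ / c := by ring
    have ha : ⟪gEst d S xt δ, v₁⟫ ≥ c - 2 * (q δ * q δ / c) := by linarith
    by_cases hk : (0:ℝ) ≤ 1 - (1/2) * (3 * q δ / c)^2
    · have e1 : (1 - (1/2) * (3 * q δ / c)^2) * c = c - (9/2) * (q δ * q δ / c) := by
        field_simp
        ring
      have h5 : (1 - (1/2) * (3 * q δ / c)^2) * ‖gEst d S xt δ‖
          ≤ (1 - (1/2) * (3 * q δ / c)^2) * c := mul_le_mul_of_nonneg_left hgc hk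
      have hQQc : 0 ≤ q δ * q δ / c := by positivity
      rw [ge_iff_le]
      linarith
    · push_neg at hk
      have h5 : (1 - (1/2) * (3 * q δ / c)^2) * ‖gEst d S xt δ‖ ≤ 0 :=
        mul_nonpos_of_nonpos_of_nonneg (by linarith) (norm_nonneg _)
      have h6 : q δ * q δ / c ≤ c / 4 := by
        rw [div_le_iff₀ hcpos]
        nlinarith
      rw [ge_iff_le]
      linarith
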